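/- arXiv:1908.00835 — 2 statements merged into one kernel-verified Lean document; each statement's English description precedes it below -/
import Mathlib

section
/- For every τ > 0, the function G₁₂(τ) = (4/π²)·E(κ(τ))·K(κ(τ)) is differentiable at τ with derivative G₁₂'(τ) = (16/(π²κ(τ)²))·[E(κ(τ))² − κ̃(τ)²·K(κ(τ))²]. -/
open Real Filter Topology intervalIntegral MeasureTheory

/-- Complete elliptic integral of the first kind. -/
noncomputable def ellipticK (k : ℝ) : ℝ :=
  ∫ α in (0:ℝ)..(Real.pi / 2), 1 / Real.sqrt (1 - k ^ 2 * Real.sin α ^ 2)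

/-- Complete elliptic integral of the second kind. -/
noncomputable def ellipticE (k : ℝ) : ℝ :=
  ∫ α in (0:ℝ)..(Real.pi / 2), Real.sqrt (1 - k ^ 2 * Real.sin α ^ 2)

/-- κ(τ) = √(1 − e^{−8τ}). -/
noncomputable def kappa (τ : ℝ) : ℝ := Real.sqrt (1 - Real.exp (-8 * τ))

/-- κ̃(τ) = e^{−4τ}. -/
noncomputable def kappaT (τ : ℝ) : ℝ := Real.exp (-4 * τ)

/-- Diagonal entry of the reduced covariance matrix of the resonant mode. -/
noncomputable def G₁₁ (τ : ℝ) : ℝ :=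
  -(4 / (Real.pi ^ 2 * kappa τ ^ 2)) *
    ((ellipticE (kappa τ) - kappaT τ ^ 2 * ellipticK (kappa τ)) *
      (ellipticK (kappa τ) - ellipticE (kappa τ)))

/-- Off-diagonal entry of the reduced covariance matrix of the resonant mode. -/
noncomputable def G₁₂ (τ : ℝ) : ℝ :=
  (4 / Real.pi ^ 2) * (ellipticE (kappa τ) * ellipticK (kappa τ))

-- basic positivity
lemma D_pos {x s : ℝ} (hx : x^2 < 1) (hs : s^2 ≤ 1) : 0 < 1 - x^2 * s^2 := by
  nlinarith [sq_nonneg x, sq_nonneg s]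

lemma hasDerivAt_inner (x s : ℝ) :
    HasDerivAt (fun y : ℝ => 1 - y^2 * s^2) (-(2*x*s^2)) x := by
  have h := ((hasDerivAt_pow 2 x).mul_const (s^2)).const_sub 1
  simpa using h.congr_deriv (by ring)

-- derivative of sqrt integrand
lemma hasDerivAt_sqrtD (x s : ℝ) (hx : x^2 < 1) (hs : s^2 ≤ 1) :
    HasDerivAt (fun y : ℝ => Real.sqrt (1 - y^2 * s^2))
      (-(x * s^2) / Real.sqrt (1 - x^2 * s^2)) x := by
  have hD := D_pos hx hs
  have h := (hasDerivAt_inner x s).sqrt (by positivity)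
  have hS : Real.sqrt (1 - x^2*s^2) ≠ 0 := by positivity
  convert h using 1
  field_simp

lemma hasDerivAt_invSqrtD (x s : ℝ) (hx : x^2 < 1) (hs : s^2 ≤ 1) :
    HasDerivAt (fun y : ℝ => 1 / Real.sqrt (1 - y^2 * s^2))
      (x * s^2 / (Real.sqrt (1 - x^2 * s^2) * (1 - x^2 * s^2))) x := by
  have hD := D_pos hx hs
  have hS : Real.sqrt (1 - x^2*s^2) ≠ 0 := by positivity
  have hSq : Real.sqrt (1 - x^2*s^2) ^ 2 = 1 - x^2*s^2 := Real.sq_sqrt hD.le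
  have h := (hasDerivAt_sqrtD x s hx hs).inv hS
  simp only [one_div]
  refine h.congr_deriv ?_
  rw [eq_div_iff (by positivity)]
  rw [hSq]
  field_simp

-- differentiation under the integral for E
lemma hasDerivAt_E_integral (k : ℝ) (hk0 : 0 < k) (hk1 : k < 1) :
    HasDerivAt ellipticE
      (∫ α in (0:ℝ)..(Real.pi/2),
        -(k * Real.sin α ^ 2) / Real.sqrt (1 - k^2 * Real.sin α ^2)) k := by
  set ε := (1 - k)/2 with hε
  have hεpos : 0 < ε := by simp [hε]; linarith
  set c := (1 + k)/2 with hc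
  have hc1 : c < 1 := by simp [hc]; linarith
  have hxball : ∀ x ∈ Metric.ball k ε, x^2 < 1 := by
    intro x hx
    rw [Metric.mem_ball, Real.dist_eq, abs_sub_lt_iff] at hx
    nlinarith [hx.1, hx.2]
  have hcont : ∀ x : ℝ, Continuous (fun α => Real.sqrt (1 - x^2 * Real.sin α ^2)) := by
    intro x; fun_prop
  have hcontF' : Continuous (fun α => -(k * Real.sin α ^ 2) / Real.sqrt (1 - k^2 * Real.sin α ^2)) := by
    have : ∀ α : ℝ, Real.sqrt (1 - k^2 * Real.sin α ^2) ≠ 0 := by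
      intro α
      have := D_pos (x := k) (s := Real.sin α) (by nlinarith) (by nlinarith [Real.sin_sq_le_one α])
      positivity
    fun_prop (disch := intro α; exact this α)
  have key := intervalIntegral.hasDerivAt_integral_of_dominated_loc_of_deriv_le
    (F := fun x α => Real.sqrt (1 - x^2 * Real.sin α ^2))
    (F' := fun x α => -(x * Real.sin α ^ 2) / Real.sqrt (1 - x^2 * Real.sin α ^2))
    (x₀ := k) (a := 0) (b := Real.pi/2) (μ := volume)
    (bound := fun _ => 1 / Real.sqrt (1 - c^2)) (Metric.ball_mem_nhds k hεpos)
    (Eventually.of_forall fun x => ((hcont x).aestronglyMeasurable))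
    ((hcont k).intervalIntegrable _ _)
    (hcontF'.aestronglyMeasurable)
    (Eventually.of_forall ?_) (by apply Continuous.intervalIntegrable; fun_prop)
    (Eventually.of_forall ?_)
  · exact key.2
  · -- bound
    intro t _ x hx
    have hs : Real.sin t ^2 ≤ 1 := by nlinarith [Real.sin_sq_le_one t]
    have hx2 : x^2 < 1 := hxball x hx
    have hxc : x^2 ≤ c^2 := by
      rw [Metric.mem_ball, Real.dist_eq, abs_sub_lt_iff] at hx
      nlinarith [hx.1, hx.2]
    have hD := D_pos hx2 hs
    have hDc : (0:ℝ) < 1 - c^2 := by nlinarith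
    have h1 : 1 - c^2 ≤ 1 - x^2 * Real.sin t ^2 := by nlinarith [sq_nonneg (Real.sin t), sq_nonneg x]
    rw [norm_div, Real.norm_eq_abs, Real.norm_eq_abs, abs_of_pos (by positivity : (0:ℝ) < Real.sqrt (1 - x^2 * Real.sin t^2))]
    have hnum : |(-(x * Real.sin t ^2))| ≤ 1 := by
      rw [abs_neg, abs_mul]
      have : |x| ≤ 1 := by
        rw [abs_le]; constructor <;> nlinarith [hx2]
      have h2 : |Real.sin t ^2| ≤ 1 := by rw [abs_of_nonneg (sq_nonneg _)]; exact hs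
      calc |x| * |Real.sin t^2| ≤ 1 * 1 := by
            exact mul_le_mul this h2 (abs_nonneg _) zero_le_one
        _ = 1 := by ring
    have hsq : Real.sqrt (1 - c^2) ≤ Real.sqrt (1 - x^2 * Real.sin t^2) := Real.sqrt_le_sqrt h1
    have hsqpos : 0 < Real.sqrt (1 - c^2) := by positivity
    exact div_le_div₀ (by norm_num) hnum hsqpos hsq
  · -- differentiability
    intro t _ x hx
    exact hasDerivAt_sqrtD x (Real.sin t) (hxball x hx) (by nlinarith [Real.sin_sq_le_one t])

lemma hasDerivAt_K_integral (k : ℝ) (hk0 : 0 < k) (hk1 : k < 1) :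
    HasDerivAt ellipticK
      (∫ α in (0:ℝ)..(Real.pi/2),
        k * Real.sin α ^ 2 / (Real.sqrt (1 - k^2 * Real.sin α ^2) * (1 - k^2 * Real.sin α ^2))) k := by
  set ε := (1 - k)/2 with hε
  have hεpos : 0 < ε := by simp [hε]; linarith
  set c := (1 + k)/2 with hc
  have hc1 : c < 1 := by simp [hc]; linarith
  have hxball : ∀ x ∈ Metric.ball k ε, x^2 < 1 := by
    intro x hx
    rw [Metric.mem_ball, Real.dist_eq, abs_sub_lt_iff] at hx
    nlinarith [hx.1, hx.2]
  have hsin : ∀ t : ℝ, Real.sin t ^ 2 ≤ 1 := fun t => by nlinarith [Real.sin_sq_le_one t]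
  have hne : ∀ x : ℝ, x^2 < 1 → ∀ α : ℝ, Real.sqrt (1 - x^2 * Real.sin α ^2) ≠ 0 := by
    intro x hx α
    have := D_pos (x := x) (s := Real.sin α) hx (hsin α)
    positivity
  have hne' : ∀ x : ℝ, x^2 < 1 → ∀ α : ℝ,
      Real.sqrt (1 - x^2 * Real.sin α ^2) * (1 - x^2 * Real.sin α ^2) ≠ 0 := by
    intro x hx α
    have hD := D_pos (x := x) (s := Real.sin α) hx (hsin α)
    positivity
  have hcont : ∀ x : ℝ, x^2 < 1 → Continuous (fun α => 1 / Real.sqrt (1 - x^2 * Real.sin α ^2)) := by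
    intro x hx
    fun_prop (disch := intro α; exact hne x hx α)
  have hk2 : k^2 < 1 := by nlinarith
  have hcontF' : Continuous (fun α =>
      k * Real.sin α ^ 2 / (Real.sqrt (1 - k^2 * Real.sin α ^2) * (1 - k^2 * Real.sin α ^2))) := by
    fun_prop (disch := intro α; exact hne' k hk2 α)
  have key := intervalIntegral.hasDerivAt_integral_of_dominated_loc_of_deriv_le
    (F := fun x α => 1 / Real.sqrt (1 - x^2 * Real.sin α ^2))
    (F' := fun x α => x * Real.sin α ^ 2 / (Real.sqrt (1 - x^2 * Real.sin α ^2) * (1 - x^2 * Real.sin α ^2)))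
    (x₀ := k) (a := 0) (b := Real.pi/2) (μ := volume)
    (bound := fun _ => 1 / (Real.sqrt (1 - c^2) * (1 - c^2))) (Metric.ball_mem_nhds k hεpos)
    ?_ ((hcont k hk2).intervalIntegrable _ _)
    (hcontF'.aestronglyMeasurable)
    (Eventually.of_forall ?_) ((continuous_const).intervalIntegrable _ _)
    (Eventually.of_forall ?_)
  · exact key.2
  · filter_upwards [Metric.ball_mem_nhds k hεpos] with x hx
    exact (hcont x (hxball x hx)).aestronglyMeasurable
  · -- bound
    intro t _ x hx
    have hs := hsin t
    have hx2 : x^2 < 1 := hxball x hx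
    have hxc : x^2 ≤ c^2 := by
      rw [Metric.mem_ball, Real.dist_eq, abs_sub_lt_iff] at hx
      nlinarith [hx.1, hx.2]
    have hD := D_pos (x := x) (s := Real.sin t) hx2 hs
    have hDc : (0:ℝ) < 1 - c^2 := by nlinarith
    have h1 : 1 - c^2 ≤ 1 - x^2 * Real.sin t ^2 := by nlinarith [sq_nonneg (Real.sin t), sq_nonneg x]
    have hden : 0 < Real.sqrt (1 - x^2 * Real.sin t^2) * (1 - x^2 * Real.sin t^2) := by positivity
    rw [norm_div, Real.norm_eq_abs, Real.norm_eq_abs, abs_of_pos hden]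
    have hnum : |x * Real.sin t ^2| ≤ 1 := by
      rw [abs_mul]
      have h3 : |x| ≤ 1 := by rw [abs_le]; constructor <;> nlinarith [hx2]
      have h2 : |Real.sin t ^2| ≤ 1 := by rw [abs_of_nonneg (sq_nonneg _)]; exact hs
      calc |x| * |Real.sin t^2| ≤ 1 * 1 := mul_le_mul h3 h2 (abs_nonneg _) zero_le_one
        _ = 1 := by ring
    have hsq : Real.sqrt (1 - c^2) * (1 - c^2) ≤ Real.sqrt (1 - x^2 * Real.sin t^2) * (1 - x^2 * Real.sin t^2) :=
      mul_le_mul (Real.sqrt_le_sqrt h1) h1 hDc.le (Real.sqrt_nonneg _)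
    exact div_le_div₀ (by norm_num) hnum (by positivity) hsq
  · -- differentiability
    intro t _ x hx
    exact hasDerivAt_invSqrtD x (Real.sin t) (hxball x hx) (hsin t)

lemma ptwiseK (k s c S : ℝ) (hk0 : 0 < k) (hk2 : k^2 < 1) (hS0 : 0 < S)
    (hS : S^2 = 1 - k^2*s^2) (hsc : s^2 + c^2 = 1) :
    k*s^2/(S*(1 - k^2*s^2)) = (1/(k*(1-k^2)))*S - (1/k)*(1/S)
      - (k/(1-k^2))*(((c^2-s^2)*(1 - k^2*s^2) + k^2*s^2*c^2)/(S*(1 - k^2*s^2))) := by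
  have hc2 : c^2 = 1 - s^2 := by linarith
  have h1 : (1:ℝ) - k^2 ≠ 0 := by nlinarith
  have hD : (1:ℝ) - k^2*s^2 ≠ 0 := by rw [← hS]; positivity
  rw [hc2]
  field_simp
  linear_combination (-(1 - k^2*s^2)) * hS

lemma ptwiseE (k s S : ℝ) (hk0 : 0 < k) (hS0 : 0 < S) (hS : S^2 = 1 - k^2*s^2) :
    -(k*s^2)/S = (1/k)*S - (1/k)*(1/S) := by
  have hk : k ≠ 0 := hk0.ne'
  field_simp
  linear_combination (-1 : ℝ) * hS

lemma sin_sq_le_one' (t : ℝ) : Real.sin t ^ 2 ≤ 1 := by nlinarith [Real.sin_sq_le_one t]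

lemma hasDerivAt_g (k : ℝ) (hk2 : k^2 < 1) (α : ℝ) :
    HasDerivAt (fun α => Real.sin α * Real.cos α / Real.sqrt (1 - k^2 * Real.sin α^2))
      (((Real.cos α^2 - Real.sin α^2) * (1 - k^2*Real.sin α^2) + k^2 * Real.sin α^2 * Real.cos α^2)
        / (Real.sqrt (1 - k^2*Real.sin α^2) * (1 - k^2*Real.sin α^2))) α := by
  have hD : 0 < 1 - k^2 * Real.sin α ^2 := D_pos hk2 (sin_sq_le_one' α)
  have hS0 : 0 < Real.sqrt (1 - k^2 * Real.sin α^2) := Real.sqrt_pos.2 hD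
  have hSq : Real.sqrt (1 - k^2 * Real.sin α^2) ^ 2 = 1 - k^2 * Real.sin α^2 := Real.sq_sqrt hD.le
  have h1 : HasDerivAt (fun α => Real.sin α * Real.cos α)
      (Real.cos α^2 - Real.sin α^2) α := by
    have := (Real.hasDerivAt_sin α).mul (Real.hasDerivAt_cos α)
    refine this.congr_deriv ?_; ring
  have h2 : HasDerivAt (fun α => 1 - k^2 * Real.sin α^2)
      (-(2*k^2*Real.sin α * Real.cos α)) α := by
    have := (((Real.hasDerivAt_sin α).pow 2).const_mul (k^2)).const_sub 1
    refine this.congr_deriv ?_; ring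
  have h3 := h2.sqrt hD.ne'
  have h4 := h3.inv hS0.ne'
  have h := h1.mul h4
  have heq : ∀ y : ℝ, Real.sin y * Real.cos y / Real.sqrt (1 - k^2 * Real.sin y^2)
      = Real.sin y * Real.cos y * (Real.sqrt (1 - k^2 * Real.sin y^2))⁻¹ := by
    intro y; rw [div_eq_mul_inv]
  rw [show (fun α => Real.sin α * Real.cos α / Real.sqrt (1 - k^2 * Real.sin α^2))
      = fun α => Real.sin α * Real.cos α * (Real.sqrt (1 - k^2 * Real.sin α^2))⁻¹ from funext heq]
  refine h.congr_deriv ?_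
  rw [eq_comm]
  simp only [Pi.inv_apply]
  rw [hSq]
  have hD' := hD.ne'
  generalize Real.sqrt (1 - k^2 * Real.sin α^2) = S at hS0 ⊢
  have hS' := hS0.ne'
  generalize 1 - k^2 * Real.sin α^2 = D at hD' ⊢
  field_simp

lemma integral_g' (k : ℝ) (hk2 : k^2 < 1) :
    (∫ α in (0:ℝ)..(Real.pi/2),
      ((Real.cos α^2 - Real.sin α^2) * (1 - k^2*Real.sin α^2) + k^2 * Real.sin α^2 * Real.cos α^2)
        / (Real.sqrt (1 - k^2*Real.sin α^2) * (1 - k^2*Real.sin α^2))) = 0 := by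
  have hne : ∀ α : ℝ, Real.sqrt (1 - k^2 * Real.sin α^2) * (1 - k^2 * Real.sin α^2) ≠ 0 := by
    intro α
    have hD : 0 < 1 - k^2 * Real.sin α ^2 := D_pos hk2 (sin_sq_le_one' α)
    positivity
  have hint : IntervalIntegrable (fun α =>
      ((Real.cos α^2 - Real.sin α^2) * (1 - k^2*Real.sin α^2) + k^2 * Real.sin α^2 * Real.cos α^2)
        / (Real.sqrt (1 - k^2*Real.sin α^2) * (1 - k^2*Real.sin α^2))) volume 0 (Real.pi/2) := by
    apply Continuous.intervalIntegrable
    fun_prop (disch := intro α; exact hne α)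
  rw [intervalIntegral.integral_eq_sub_of_hasDerivAt (fun α _ => hasDerivAt_g k hk2 α) hint]
  simp

lemma intS (k : ℝ) : IntervalIntegrable (fun α => Real.sqrt (1 - k^2*Real.sin α^2)) volume 0 (Real.pi/2) :=
  Continuous.intervalIntegrable (by fun_prop) _ _

lemma intInvS (k : ℝ) (hk2 : k^2 < 1) :
    IntervalIntegrable (fun α => 1 / Real.sqrt (1 - k^2*Real.sin α^2)) volume 0 (Real.pi/2) := by
  apply Continuous.intervalIntegrable
  have hne : ∀ α : ℝ, Real.sqrt (1 - k^2 * Real.sin α^2) ≠ 0 := by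
    intro α
    have hD : 0 < 1 - k^2 * Real.sin α ^2 := D_pos hk2 (sin_sq_le_one' α)
    positivity
  fun_prop (disch := intro α; exact hne α)

lemma intG' (k : ℝ) (hk2 : k^2 < 1) :
    IntervalIntegrable (fun α =>
      ((Real.cos α^2 - Real.sin α^2) * (1 - k^2*Real.sin α^2) + k^2 * Real.sin α^2 * Real.cos α^2)
        / (Real.sqrt (1 - k^2*Real.sin α^2) * (1 - k^2*Real.sin α^2))) volume 0 (Real.pi/2) := by
  apply Continuous.intervalIntegrable
  have hne : ∀ α : ℝ, Real.sqrt (1 - k^2 * Real.sin α^2) * (1 - k^2 * Real.sin α^2) ≠ 0 := by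
    intro α
    have hD : 0 < 1 - k^2 * Real.sin α ^2 := D_pos hk2 (sin_sq_le_one' α)
    positivity
  fun_prop (disch := intro α; exact hne α)

lemma hasDerivAt_E (k : ℝ) (hk0 : 0 < k) (hk1 : k < 1) :
    HasDerivAt ellipticE ((ellipticE k - ellipticK k)/k) k := by
  have hk2 : k^2 < 1 := by nlinarith
  have h := hasDerivAt_E_integral k hk0 hk1
  have hcalc : (∫ α in (0:ℝ)..(Real.pi/2),
      -(k * Real.sin α ^ 2) / Real.sqrt (1 - k^2 * Real.sin α ^2))
      = (ellipticE k - ellipticK k)/k := by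
    have h1 : (∫ α in (0:ℝ)..(Real.pi/2),
        -(k * Real.sin α ^ 2) / Real.sqrt (1 - k^2 * Real.sin α ^2))
        = ∫ α in (0:ℝ)..(Real.pi/2),
          ((1/k) * Real.sqrt (1 - k^2*Real.sin α^2) - (1/k) * (1 / Real.sqrt (1 - k^2*Real.sin α^2))) := by
      apply intervalIntegral.integral_congr
      intro α _
      have hD : 0 < 1 - k^2 * Real.sin α ^2 := D_pos hk2 (sin_sq_le_one' α)
      exact ptwiseE k (Real.sin α) _ hk0 (Real.sqrt_pos.2 hD) (Real.sq_sqrt hD.le)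
    rw [h1, intervalIntegral.integral_sub ((intS k).const_mul (1/k)) ((intInvS k hk2).const_mul (1/k)),
      intervalIntegral.integral_const_mul, intervalIntegral.integral_const_mul]
    rw [ellipticE, ellipticK]; ring
  exact hcalc ▸ h

lemma hasDerivAt_K (k : ℝ) (hk0 : 0 < k) (hk1 : k < 1) :
    HasDerivAt ellipticK (ellipticE k/(k*(1-k^2)) - ellipticK k/k) k := by
  have hk2 : k^2 < 1 := by nlinarith
  have h := hasDerivAt_K_integral k hk0 hk1
  have hcalc : (∫ α in (0:ℝ)..(Real.pi/2),
      k * Real.sin α ^ 2 / (Real.sqrt (1 - k^2 * Real.sin α ^2) * (1 - k^2 * Real.sin α ^2)))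
      = ellipticE k/(k*(1-k^2)) - ellipticK k/k := by
    have h1 : (∫ α in (0:ℝ)..(Real.pi/2),
        k * Real.sin α ^ 2 / (Real.sqrt (1 - k^2 * Real.sin α ^2) * (1 - k^2 * Real.sin α ^2)))
        = ∫ α in (0:ℝ)..(Real.pi/2),
          ((1/(k*(1-k^2))) * Real.sqrt (1 - k^2*Real.sin α^2)
            - (1/k) * (1 / Real.sqrt (1 - k^2*Real.sin α^2))
            - (k/(1-k^2)) * (((Real.cos α^2 - Real.sin α^2) * (1 - k^2*Real.sin α^2)
                + k^2 * Real.sin α^2 * Real.cos α^2)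
              / (Real.sqrt (1 - k^2*Real.sin α^2) * (1 - k^2*Real.sin α^2)))) := by
      apply intervalIntegral.integral_congr
      intro α _
      have hD : 0 < 1 - k^2 * Real.sin α ^2 := D_pos hk2 (sin_sq_le_one' α)
      exact ptwiseK k (Real.sin α) (Real.cos α) _ hk0 hk2 (Real.sqrt_pos.2 hD)
        (Real.sq_sqrt hD.le) (by nlinarith [Real.sin_sq_add_cos_sq α])
    rw [h1, intervalIntegral.integral_sub
        (((intS k).const_mul _).sub ((intInvS k hk2).const_mul _)) ((intG' k hk2).const_mul _),
      intervalIntegral.integral_sub ((intS k).const_mul _) ((intInvS k hk2).const_mul _),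
      intervalIntegral.integral_const_mul, intervalIntegral.integral_const_mul,
      intervalIntegral.integral_const_mul, integral_g' k hk2]
    rw [ellipticE, ellipticK]; ring
  exact hcalc ▸ h

/-- For every τ > 0, G₁₂ is differentiable at τ with the stated derivative. -/
theorem stmt_3 (τ : ℝ) (hτ : 0 < τ) :
    HasDerivAt G₁₂
      ((16 / (Real.pi ^ 2 * kappa τ ^ 2)) *
        (ellipticE (kappa τ) ^ 2 - kappaT τ ^ 2 * ellipticK (kappa τ) ^ 2)) τ := by
  have hε1 : Real.exp (-8 * τ) < 1 := by
    rw [Real.exp_lt_one_iff]; linarith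
  have hεpos : 0 < Real.exp (-8 * τ) := Real.exp_pos _
  have hk0 : 0 < kappa τ := Real.sqrt_pos.2 (by linarith)
  have hk1 : kappa τ < 1 := by
    rw [kappa, Real.sqrt_lt' one_pos]
    nlinarith
  have hk2 : kappa τ ^ 2 = 1 - Real.exp (-8 * τ) := Real.sq_sqrt (by linarith)
  have hκ : HasDerivAt kappa (4 * Real.exp (-8 * τ) / kappa τ) τ := by
    have hinner : HasDerivAt (fun τ : ℝ => 1 - Real.exp (-8 * τ)) (8 * Real.exp (-8 * τ)) τ := by
      have := (((hasDerivAt_id τ).const_mul (-8 : ℝ)).exp).const_sub 1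
      refine this.congr_deriv ?_; simp only [id_eq]; ring
    have := hinner.sqrt (by linarith : (0:ℝ) < 1 - Real.exp (-8*τ)).ne'
    refine this.congr_deriv ?_
    rw [kappa]
    field_simp
    ring
  have hE := (hasDerivAt_E (kappa τ) hk0 hk1).comp τ hκ
  have hK := (hasDerivAt_K (kappa τ) hk0 hk1).comp τ hκ
  have h := (hE.mul hK).const_mul (4 / Real.pi ^ 2)
  have hfun : G₁₂ = fun τ => 4 / Real.pi ^ 2 *
      ((ellipticE ∘ kappa) τ * (ellipticK ∘ kappa) τ) := rfl
  rw [hfun]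
  refine h.congr_deriv ?_
  have hπ : Real.pi ≠ 0 := Real.pi_ne_zero
  have hkT : kappaT τ ^ 2 = Real.exp (-8 * τ) := by
    rw [kappaT, sq, ← Real.exp_add]; ring_nf
  have h1k : 1 - kappa τ ^ 2 = Real.exp (-8 * τ) := by rw [hk2]; ring
  rw [hkT, Function.comp_apply, Function.comp_apply, h1k]
  have hkne : kappa τ ≠ 0 := hk0.ne'
  field_simp
  ring
end

section
/- As τ → ∞, G₁₁(τ) + (4/π²)·(4τ + log 4 − 1) → 0 and G₁₂(τ) − (4/π²)·(4τ + log 4) → 0, where G₁₁(τ) = −(4/(π²κ(τ)²))·(E(κ(τ)) − κ̃(τ)²·K(κ(τ)))·(K(κ(τ)) − E(κ(τ))) and G₁₂(τ) = (4/π²)·E(κ(τ))·K(κ(τ)). -/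
open Real Filter Topology MeasureTheory intervalIntegral

/-- auxiliary: A(ε, α) = cos²α + ε² sin²α -/
noncomputable def fA (ε α : ℝ) : ℝ := Real.cos α ^ 2 + ε ^ 2 * Real.sin α ^ 2

lemma kappaT_pos (τ : ℝ) : 0 < kappaT τ := Real.exp_pos _

lemma kappaT_sq (τ : ℝ) : kappaT τ ^ 2 = Real.exp (-8 * τ) := by
  rw [kappaT, ← Real.exp_nat_mul]; ring_nf

lemma kappa_sq {τ : ℝ} (hτ : 0 ≤ τ) : kappa τ ^ 2 = 1 - kappaT τ ^ 2 := by
  rw [kappa, kappaT_sq, Real.sq_sqrt]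
  have : Real.exp (-8 * τ) ≤ 1 := Real.exp_le_one_iff.2 (by linarith)
  linarith

lemma one_sub_kappa {τ : ℝ} (hτ' : 0 ≤ τ) (α : ℝ) :
    1 - kappa τ ^ 2 * Real.sin α ^ 2 = fA (kappaT τ) α := by
  rw [kappa_sq hτ', fA]
  have := Real.sin_sq_add_cos_sq α
  ring_nf
  nlinarith [Real.sin_sq_add_cos_sq α]

lemma fA_pos {ε : ℝ} (hε : 0 < ε) (α : ℝ) : 0 < fA ε α := by
  have h := Real.sin_sq_add_cos_sq α
  have h2 : 0 < ε ^ 2 := by positivity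
  rw [fA]
  nlinarith [sq_nonneg (Real.cos α), sq_nonneg (Real.sin α), mul_nonneg h2.le (sq_nonneg (Real.sin α))]

lemma ellipticK_eq {τ : ℝ} (hτ : 0 ≤ τ) :
    ellipticK (kappa τ) = ∫ α in (0:ℝ)..(Real.pi / 2), 1 / Real.sqrt (fA (kappaT τ) α) := by
  unfold ellipticK
  have h : ∀ α : ℝ, 1 - kappa τ ^ 2 * Real.sin α ^ 2 = fA (kappaT τ) α :=
    one_sub_kappa hτ
  simp only [h]

lemma ellipticE_eq {τ : ℝ} (hτ : 0 ≤ τ) :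
    ellipticE (kappa τ) = ∫ α in (0:ℝ)..(Real.pi / 2), Real.sqrt (fA (kappaT τ) α) := by
  unfold ellipticE
  have h : ∀ α : ℝ, 1 - kappa τ ^ 2 * Real.sin α ^ 2 = fA (kappaT τ) α :=
    one_sub_kappa hτ
  simp only [h]


lemma contF {ε : ℝ} (hε : 0 < ε) : Continuous (fun α => 1 / Real.sqrt (fA ε α)) := by
  apply continuous_const.div
  · exact ((Real.continuous_cos.pow 2).add (continuous_const.mul (Real.continuous_sin.pow 2))).sqrt
  · intro α
    exact ne_of_gt (Real.sqrt_pos.2 (fA_pos hε α))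

lemma contG {ε : ℝ} (hε : 0 < ε) :
    Continuous (fun α : ℝ => 1 / Real.sqrt ((Real.pi/2 - α)^2 + ε^2)) := by
  apply continuous_const.div
  · exact (((continuous_const.sub continuous_id).pow 2).add continuous_const).sqrt
  · intro α
    apply ne_of_gt (Real.sqrt_pos.2 _)
    positivity

lemma g_hasDeriv {ε : ℝ} (hε : 0 < ε) (α : ℝ) :
    HasDerivAt (fun α : ℝ => - Real.arsinh ((Real.pi/2 - α)/ε))
      (1 / Real.sqrt ((Real.pi/2 - α)^2 + ε^2)) α := by
  have h1 : HasDerivAt (fun α : ℝ => (Real.pi/2 - α)/ε) (-1/ε) α := by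
    simpa using ((hasDerivAt_id α).const_sub (Real.pi/2)).div_const ε
  have h2 := (Real.hasDerivAt_arsinh ((Real.pi/2 - α)/ε)).comp α h1
  have h3 := h2.neg
  refine h3.congr_deriv ?_
  have hs : Real.sqrt (1 + ((Real.pi/2 - α)/ε)^2)
      = Real.sqrt ((Real.pi/2 - α)^2 + ε^2) / ε := by
    rw [eq_div_iff (ne_of_gt hε), ← Real.sqrt_sq hε.le]
    rw [← Real.sqrt_mul (by positivity)]
    congr 1
    field_simp
    rw [Real.sqrt_sq hε.le]
    ring
  rw [hs]
  field_simp

lemma g_integral {ε : ℝ} (hε : 0 < ε) :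
    ∫ α in (0:ℝ)..(Real.pi/2), 1 / Real.sqrt ((Real.pi/2 - α)^2 + ε^2)
      = Real.arsinh (Real.pi/(2*ε)) := by
  rw [integral_eq_sub_of_hasDerivAt (fun α _ => g_hasDeriv hε α)
    ((contG hε).intervalIntegrable _ _)]
  simp [Real.arsinh_zero]
  rw [div_div]

lemma exp_neg8_tendsto : Tendsto (fun τ : ℝ => Real.exp (-8*τ)) atTop (𝓝 0) := by
  have h : Tendsto (fun τ : ℝ => -8*τ) atTop atBot := by
    apply Tendsto.const_mul_atTop_of_neg (by norm_num : (-8:ℝ) < 0) tendsto_id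
  exact Real.tendsto_exp_atBot.comp h

lemma arsinh_key (τ : ℝ) :
    Real.arsinh (Real.pi/(2 * kappaT τ)) - (4*τ + Real.log Real.pi)
      = Real.log ((Real.pi/2 + Real.sqrt (Real.exp (-8*τ) + Real.pi^2/4))/Real.pi) := by
  have hpi := Real.pi_pos
  have he4 : (0:ℝ) < Real.exp (4*τ) := Real.exp_pos _
  have ht : Real.pi/(2 * kappaT τ) = (Real.pi/2) * Real.exp (4*τ) := by
    rw [kappaT, show (-4:ℝ)*τ = -(4*τ) by ring, Real.exp_neg]
    field_simp
  have e1 : Real.exp (4*τ)^2 = Real.exp (8*τ) := by rw [← Real.exp_nat_mul]; ring_nf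
  have e2 : Real.exp (8*τ) * Real.exp (-8*τ) = 1 := by rw [← Real.exp_add]; simp
  have hsq : Real.sqrt (1 + ((Real.pi/2) * Real.exp (4*τ))^2)
      = Real.exp (4*τ) * Real.sqrt (Real.exp (-8*τ) + Real.pi^2/4) := by
    rw [show 1 + ((Real.pi/2) * Real.exp (4*τ))^2
        = Real.exp (4*τ)^2 * (Real.exp (-8*τ) + Real.pi^2/4) by linear_combination (-(Real.exp (-8*τ))) * e1 - e2,
      Real.sqrt_mul (sq_nonneg _), Real.sqrt_sq he4.le]
  have hposs : 0 < Real.pi/2 + Real.sqrt (Real.exp (-8*τ) + Real.pi^2/4) := by positivity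
  rw [ht, Real.arsinh, hsq]
  have : (Real.pi/2) * Real.exp (4*τ) + Real.exp (4*τ) * Real.sqrt (Real.exp (-8*τ) + Real.pi^2/4)
      = Real.exp (4*τ) * (Real.pi/2 + Real.sqrt (Real.exp (-8*τ) + Real.pi^2/4)) := by ring
  rw [this, Real.log_mul (ne_of_gt he4) (ne_of_gt hposs), Real.log_exp,
    Real.log_div (ne_of_gt hposs) (ne_of_gt hpi)]
  ring

lemma arsinh_asymp :
    Tendsto (fun τ => Real.arsinh (Real.pi/(2 * kappaT τ)) - (4*τ + Real.log Real.pi))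
      atTop (𝓝 0) := by
  have hpi := Real.pi_pos
  have h2 : Tendsto (fun τ : ℝ => (Real.pi/2 + Real.sqrt (Real.exp (-8*τ) + Real.pi^2/4))/Real.pi)
      atTop (𝓝 1) := by
    have hs : Tendsto (fun τ : ℝ => Real.sqrt (Real.exp (-8*τ) + Real.pi^2/4)) atTop
        (𝓝 (Real.pi/2)) := by
      have harg : Tendsto (fun τ : ℝ => Real.exp (-8*τ) + Real.pi^2/4) atTop (𝓝 (Real.pi^2/4)) := by
        simpa using exp_neg8_tendsto.add (tendsto_const_nhds (x := Real.pi^2/4))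
      have := (Real.continuous_sqrt.continuousAt (x := Real.pi^2/4)).tendsto.comp harg
      have hval : Real.sqrt (Real.pi^2/4) = Real.pi/2 := by
        rw [show Real.pi^2/4 = (Real.pi/2)^2 by ring, Real.sqrt_sq (by positivity)]
      rwa [hval] at this
    have := (tendsto_const_nhds (x := Real.pi/2)).add hs
    have h3 := this.div_const Real.pi
    have : (Real.pi/2 + Real.pi/2)/Real.pi = 1 := by field_simp; norm_num
    rwa [this] at h3
  have h4 := ((Real.continuousAt_log one_ne_zero).tendsto).comp h2
  rw [Real.log_one] at h4
  refine Tendsto.congr (fun τ => (arsinh_key τ).symm) h4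
lemma sq_sub_sin_sq_le {x : ℝ} (hx : 0 < x) : x^2 - Real.sin x^2 ≤ x^4 := by
  rcases le_or_gt x 1 with h | h
  · have hx2' : x^2 ≤ 1 := by nlinarith
    have h0 : 0 ≤ x - x^3/4 := by nlinarith [mul_le_mul_of_nonneg_left hx2' hx.le]
    have h1 : (x - x^3/4)^2 ≤ Real.sin x^2 :=
      pow_le_pow_left₀ h0 (le_trans (by nlinarith [pow_pos hx 3]) (Real.sin_gt_sub_cube hx).le) 2
    nlinarith [pow_nonneg hx.le 6]
  · have h1 : 1 ≤ x^2 := by nlinarith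
    nlinarith [sq_nonneg (Real.sin x), mul_le_mul_of_nonneg_left h1 (sq_nonneg x)]

lemma core_ineq {ε x sx sa sb : ℝ} (hε : 0 < ε) (hε1 : ε ≤ 1)
    (hx0 : 0 < x) (hx2 : x ≤ Real.pi/2)
    (hsx0 : 0 ≤ sx) (hsxx : sx ≤ x) (hsxlb : 2/Real.pi*x ≤ sx)
    (hx4 : x^2 - sx^2 ≤ x^4)
    (hsa : 0 < sa) (hsb : 0 < sb)
    (hsaxlb : sx ≤ sa) (hxlb : x ≤ sb) (helb : ε ≤ sb)
    (hBA : sb^2 - sa^2 = (x^2 - sx^2) + ε^2*sx^2) :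
    |1/sa - 1/sb| ≤ Real.pi^3/8 + Real.pi^2/4 := by
  have hpi := Real.pi_pos
  have hsalb : 2/Real.pi*x ≤ sa := hsxlb.trans hsaxlb
  have hid : 1/sa - 1/sb = (sb^2 - sa^2)/(sa*sb*(sa+sb)) := by
    field_simp
    ring
  have hxx : sx^2 ≤ x^2 := by nlinarith
  have hBAnn : 0 ≤ sb^2 - sa^2 := by
    rw [hBA]
    nlinarith [mul_nonneg (sq_nonneg ε) (sq_nonneg sx)]
  have hDpos : 0 < sa*sb*(sa+sb) := by positivity
  rw [hid, abs_of_nonneg (div_nonneg hBAnn hDpos.le), hBA, add_div]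
  have m1 : (2/Real.pi*x)*x ≤ sa*sb := mul_le_mul hsalb hxlb hx0.le hsa.le
  have msum : 2/Real.pi*x ≤ sa + sb := le_trans hsalb (le_add_of_nonneg_right hsb.le)
  have hd1 : ((2/Real.pi*x)*x)*(2/Real.pi*x) = 4/Real.pi^2 * x^3 := by
    field_simp
    ring
  have hd2 : ((2/Real.pi*x)*ε)*(2/Real.pi*x) = 4/Real.pi^2 * (ε * x^2) := by
    field_simp
    ring
  have m2 : 4/Real.pi^2 * x^3 ≤ sa*sb*(sa+sb) := by
    rw [← hd1]
    exact mul_le_mul m1 msum (by positivity) (by positivity)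
  have m3 : (2/Real.pi*x)*ε ≤ sa*sb := mul_le_mul hsalb helb hε.le hsa.le
  have m4 : 4/Real.pi^2 * (ε * x^2) ≤ sa*sb*(sa+sb) := by
    rw [← hd2]
    exact mul_le_mul m3 msum (by positivity) (by positivity)
  have t1 : (x^2 - sx^2)/(sa*sb*(sa+sb)) ≤ Real.pi^3/8 := by
    have hdp : (0:ℝ) < 4/Real.pi^2 * x^3 := by positivity
    have h := div_le_div₀ (pow_nonneg hx0.le 4) hx4 hdp m2
    refine h.trans ?_
    rw [div_le_iff₀ hdp]
    have hq : Real.pi^3/8 * (4/Real.pi^2 * x^3) = Real.pi/2 * x^3 := by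
      field_simp; ring
    rw [hq]
    calc x^4 = x * x^3 := by ring
      _ ≤ (Real.pi/2) * x^3 := mul_le_mul_of_nonneg_right hx2 (pow_nonneg hx0.le 3)
  have t2 : (ε^2 * sx^2)/(sa*sb*(sa+sb)) ≤ Real.pi^2/4 := by
    have hdp : (0:ℝ) < 4/Real.pi^2 * (ε * x^2) := by positivity
    have hnum : ε^2 * sx^2 ≤ ε^2 * x^2 := by nlinarith
    have h := div_le_div₀ (by positivity : (0:ℝ) ≤ ε^2 * x^2) hnum hdp m4
    refine h.trans ?_
    rw [div_le_iff₀ hdp]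
    have hq : Real.pi^2/4 * (4/Real.pi^2 * (ε * x^2)) = ε * x^2 := by
      field_simp
    rw [hq]
    calc ε^2*x^2 = ε*(ε*x^2) := by ring
      _ ≤ 1*(ε*x^2) := mul_le_mul_of_nonneg_right hε1 (by positivity)
      _ = ε*x^2 := one_mul _
  exact add_le_add t1 t2

lemma key_bound {ε α : ℝ} (hε : 0 < ε) (hε1 : ε ≤ 1) (hα : 0 ≤ α) (hα2 : α < Real.pi/2) :
    |1 / Real.sqrt (fA ε α) - 1 / Real.sqrt ((Real.pi/2 - α)^2 + ε^2)|
      ≤ Real.pi^3/8 + Real.pi^2/4 := by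
  have hpi := Real.pi_pos
  have hx0 : 0 < Real.pi/2 - α := by linarith
  have hx2 : Real.pi/2 - α ≤ Real.pi/2 := by linarith
  have hA : 0 < fA ε α := fA_pos hε α
  have hB : 0 < (Real.pi/2 - α)^2 + ε^2 := by positivity
  have hsinpos : 0 ≤ Real.sin (Real.pi/2 - α) :=
    Real.sin_nonneg_of_nonneg_of_le_pi hx0.le (by linarith)
  have hAeq : fA ε α = Real.sin (Real.pi/2 - α) ^2 + ε^2 * Real.cos (Real.pi/2 - α) ^2 := by
    rw [fA, Real.sin_pi_div_two_sub, Real.cos_pi_div_two_sub]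
  refine core_ineq hε hε1 hx0 hx2 hsinpos ((Real.sin_lt hx0).le)
    (Real.mul_le_sin hx0.le hx2) (sq_sub_sin_sq_le hx0)
    (Real.sqrt_pos.2 hA) (Real.sqrt_pos.2 hB) ?_ ?_ ?_ ?_
  · calc Real.sin (Real.pi/2 - α) = Real.sqrt (Real.sin (Real.pi/2 - α)^2) :=
          (Real.sqrt_sq hsinpos).symm
      _ ≤ Real.sqrt (fA ε α) := Real.sqrt_le_sqrt (by
          rw [hAeq]
          nlinarith [mul_nonneg (sq_nonneg ε) (sq_nonneg (Real.cos (Real.pi/2 - α)))])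
  · exact (Real.le_sqrt' hx0).2 (by nlinarith)
  · exact (Real.le_sqrt' hε).2 (by nlinarith)
  · rw [Real.sq_sqrt hB.le, Real.sq_sqrt hA.le, hAeq]
    linear_combination (-(ε^2)) * Real.sin_sq_add_cos_sq (Real.pi/2 - α)

lemma ae_ne_pi_div_two : ∀ᵐ (α : ℝ), α ≠ Real.pi/2 := by
  rw [MeasureTheory.ae_iff]
  have : {a : ℝ | ¬a ≠ Real.pi/2} = {Real.pi/2} := by
    ext a; simp
  rw [this]
  exact Real.volume_singleton

lemma kappaT_tendsto : Tendsto kappaT atTop (𝓝 0) := by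
  have h : Tendsto (fun τ : ℝ => -4*τ) atTop atBot :=
    Tendsto.const_mul_atTop_of_neg (by norm_num : (-4:ℝ) < 0) tendsto_id
  exact Real.tendsto_exp_atBot.comp h

lemma I2_tendsto :
    Tendsto (fun τ : ℝ => ∫ α in (0:ℝ)..(Real.pi/2),
        (1/Real.sqrt (fA (kappaT τ) α) - 1/Real.sqrt ((Real.pi/2-α)^2 + kappaT τ^2)))
      atTop (𝓝 (∫ α in (0:ℝ)..(Real.pi/2), (1/Real.cos α - 1/(Real.pi/2 - α)))) := by
  have hpi := Real.pi_pos
  apply intervalIntegral.tendsto_integral_filter_of_dominated_convergence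
    (bound := fun _ => Real.pi^3/8 + Real.pi^2/4)
  · filter_upwards with τ
    exact ((contF (kappaT_pos τ)).sub (contG (kappaT_pos τ))).aestronglyMeasurable
  · filter_upwards [eventually_ge_atTop (0:ℝ)] with τ hτ
    filter_upwards [ae_ne_pi_div_two] with α hα hmem
    rw [Set.uIoc_of_le (by positivity : (0:ℝ) ≤ Real.pi/2)] at hmem
    have hε1 : kappaT τ ≤ 1 := Real.exp_le_one_iff.2 (by linarith)
    rw [Real.norm_eq_abs]
    exact key_bound (kappaT_pos τ) hε1 hmem.1.le (lt_of_le_of_ne hmem.2 hα)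
  · exact intervalIntegrable_const
  · filter_upwards [ae_ne_pi_div_two] with α hα hmem
    rw [Set.uIoc_of_le (by positivity : (0:ℝ) ≤ Real.pi/2)] at hmem
    have hα2 : α < Real.pi/2 := lt_of_le_of_ne hmem.2 hα
    have hcos : 0 < Real.cos α :=
      Real.cos_pos_of_mem_Ioo ⟨by linarith [hmem.1], hα2⟩
    have hx : 0 < Real.pi/2 - α := by linarith
    have h1 : Tendsto (fun ε : ℝ => Real.sqrt (fA ε α)) (𝓝 0) (𝓝 (Real.cos α)) := by
      have hc : Continuous (fun ε : ℝ => Real.sqrt (fA ε α)) := by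
        unfold fA
        exact (continuous_const.add ((continuous_pow 2).mul continuous_const)).sqrt
      have hval : Real.sqrt (fA 0 α) = Real.cos α := by
        rw [fA]
        norm_num
        exact Real.sqrt_sq hcos.le
      have := hc.continuousAt (x := 0)
      rwa [ContinuousAt, hval] at this
    have h2 : Tendsto (fun ε : ℝ => Real.sqrt ((Real.pi/2-α)^2 + ε^2)) (𝓝 0)
        (𝓝 (Real.pi/2 - α)) := by
      have hc : Continuous (fun ε : ℝ => Real.sqrt ((Real.pi/2-α)^2 + ε^2)) :=
        (continuous_const.add (continuous_pow 2)).sqrt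
      have hval : Real.sqrt ((Real.pi/2-α)^2 + (0:ℝ)^2) = Real.pi/2 - α := by
        norm_num
        exact Real.sqrt_sq hx.le
      have := hc.continuousAt (x := 0)
      rwa [ContinuousAt, hval] at this
    have hT : Tendsto (fun ε : ℝ => 1/Real.sqrt (fA ε α) - 1/Real.sqrt ((Real.pi/2-α)^2 + ε^2))
        (𝓝 0) (𝓝 (1/Real.cos α - 1/(Real.pi/2 - α))) :=
      (tendsto_const_nhds.div h1 (ne_of_gt hcos)).sub
        (tendsto_const_nhds.div h2 (ne_of_gt hx))
    exact hT.comp kappaT_tendsto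

lemma h_bound {α : ℝ} (hα : 0 ≤ α) (hα2 : α < Real.pi/2) :
    |1/Real.cos α - 1/(Real.pi/2 - α)| ≤ Real.pi^2/4 := by
  have hpi := Real.pi_pos
  have hx0 : 0 < Real.pi/2 - α := by linarith
  have hx2 : Real.pi/2 - α ≤ Real.pi/2 := by linarith
  have hcos : 0 < Real.cos α := Real.cos_pos_of_mem_Ioo ⟨by linarith, hα2⟩
  have hcs : Real.cos α = Real.sin (Real.pi/2 - α) := (Real.sin_pi_div_two_sub α).symm
  rw [hcs]
  generalize hxd : Real.pi/2 - α = x at *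
  set sx := Real.sin x with hsxd
  have hsx : 0 < sx := by rw [hsxd]; rw [hcs] at hcos; exact hcos
  have hsxx : sx ≤ x := (Real.sin_lt hx0).le
  have hsxlb : 2/Real.pi*x ≤ sx := Real.mul_le_sin hx0.le hx2
  have hid : 1/sx - 1/x = (x - sx)/(sx*x) := by
    field_simp
  have hnn : 0 ≤ 1/sx - 1/x := by
    rw [hid]
    exact div_nonneg (by linarith) (by positivity)
  rw [abs_of_nonneg hnn, hid]
  have hx4 : x^2 - sx^2 ≤ x^4 := sq_sub_sin_sq_le hx0
  have hnum : x - sx ≤ x^3 := by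
    nlinarith [mul_nonneg (pow_nonneg hx0.le 3) hsx.le]
  have hden : (2/Real.pi*x)*x ≤ sx*x := mul_le_mul_of_nonneg_right hsxlb hx0.le
  have hdp : (0:ℝ) < (2/Real.pi*x)*x := by positivity
  have h := div_le_div₀ (pow_nonneg hx0.le 3) hnum hdp hden
  refine h.trans ?_
  rw [div_le_iff₀ hdp]
  have hq : Real.pi^2/4 * (2/Real.pi*x*x) = Real.pi/2 * x^2 := by
    field_simp; ring
  rw [hq]
  calc x^3 = x * x^2 := by ring
    _ ≤ (Real.pi/2) * x^2 := mul_le_mul_of_nonneg_right hx2 (sq_nonneg x)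

lemma h_integrableOn :
    MeasureTheory.IntegrableOn (fun α : ℝ => 1/Real.cos α - 1/(Real.pi/2 - α))
      (Set.Icc 0 (Real.pi/2)) := by
  have hpi := Real.pi_pos
  have hmeas : MeasureTheory.AEStronglyMeasurable
      (fun α : ℝ => 1/Real.cos α - 1/(Real.pi/2 - α)) (volume : Measure ℝ) :=
    ((measurable_const.div Real.measurable_cos).sub
      (measurable_const.div (measurable_const.sub measurable_id))).aestronglyMeasurable
  refine MeasureTheory.Measure.integrableOn_of_bounded (M := Real.pi^2/4) ?_ hmeas ?_
  · rw [Real.volume_Icc]; exact ENNReal.ofReal_ne_top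
  · rw [MeasureTheory.ae_restrict_iff' measurableSet_Icc]
    filter_upwards [ae_ne_pi_div_two] with α hα hmem
    rw [Real.norm_eq_abs]
    exact h_bound hmem.1 (lt_of_le_of_ne hmem.2 hα)

lemma sin_div_tendsto : Tendsto (fun x : ℝ => Real.sin x / x) (𝓝[≠] 0) (𝓝 1) := by
  have h := Real.hasDerivAt_sin 0
  rw [hasDerivAt_iff_tendsto_slope, Real.cos_zero] at h
  refine Tendsto.congr (fun x => ?_) h
  simp [slope_def_field]

lemma J_value :
    ∫ α in (0:ℝ)..(Real.pi/2), (1/Real.cos α - 1/(Real.pi/2 - α))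
      = Real.log 4 - Real.log Real.pi := by
  have hpi := Real.pi_pos
  set h : ℝ → ℝ := fun α => 1/Real.cos α - 1/(Real.pi/2 - α) with hh
  set G : ℝ → ℝ := fun b => ∫ α in (0:ℝ)..b, h α with hG
  set F : ℝ → ℝ := fun b => Real.log (1 + Real.sin b) - Real.log (Real.cos b)
      + Real.log (Real.pi/2 - b) - Real.log (Real.pi/2) with hF
  have hint : MeasureTheory.IntegrableOn h (Set.uIcc 0 (Real.pi/2)) := by
    rw [Set.uIcc_of_le (by positivity)]
    exact h_integrableOn
  have hGcont : ContinuousOn G (Set.uIcc 0 (Real.pi/2)) :=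
    intervalIntegral.continuousOn_primitive_interval hint
  have hmem : Real.pi/2 ∈ Set.uIcc 0 (Real.pi/2) := Set.right_mem_uIcc
  have hGtend : Tendsto G (𝓝[Set.Ico 0 (Real.pi/2)] (Real.pi/2)) (𝓝 (G (Real.pi/2))) := by
    have := (hGcont (Real.pi/2) hmem).tendsto
    refine this.mono_left (nhdsWithin_mono _ ?_)
    rw [Set.uIcc_of_le (by positivity)]
    exact Set.Ico_subset_Icc_self
  have hGF : ∀ b ∈ Set.Ico (0:ℝ) (Real.pi/2), G b = F b := by
    intro b hb
    have hb0 : (0:ℝ) ≤ b := hb.1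
    have hb2 : b < Real.pi/2 := hb.2
    have hderiv : ∀ α ∈ Set.uIcc (0:ℝ) b, HasDerivAt F (h α) α := by
      intro α hα
      rw [Set.uIcc_of_le hb0] at hα
      have hα2 : α < Real.pi/2 := lt_of_le_of_lt hα.2 hb2
      have hcos : 0 < Real.cos α := Real.cos_pos_of_mem_Ioo ⟨by linarith [hα.1], hα2⟩
      have hsin : 0 ≤ Real.sin α := Real.sin_nonneg_of_nonneg_of_le_pi hα.1 (by linarith)
      have h1s : (0:ℝ) < 1 + Real.sin α := by linarith
      have hxp : (0:ℝ) < Real.pi/2 - α := by linarith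
      have d1 : HasDerivAt (fun b => Real.log (1 + Real.sin b))
          (Real.cos α / (1 + Real.sin α)) α := by
        have := (Real.hasDerivAt_log h1s.ne').comp α
          ((Real.hasDerivAt_sin α).const_add 1)
        simpa [div_eq_inv_mul, Function.comp_def] using this
      have d2 : HasDerivAt (fun b => Real.log (Real.cos b))
          (-Real.sin α / Real.cos α) α := by
        have := (Real.hasDerivAt_log hcos.ne').comp α (Real.hasDerivAt_cos α)
        simpa [div_eq_inv_mul, mul_comm, Function.comp_def] using this
      have d3 : HasDerivAt (fun b => Real.log (Real.pi/2 - b))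
          (-1 / (Real.pi/2 - α)) α := by
        have hinner : HasDerivAt (fun b : ℝ => Real.pi/2 - b) (-1) α := by
          simpa using (hasDerivAt_id α).const_sub (Real.pi/2)
        have := (Real.hasDerivAt_log hxp.ne').comp α hinner
        simpa [div_eq_inv_mul, mul_comm, Function.comp_def] using this
      have dF := ((d1.sub d2).add d3).sub_const (Real.log (Real.pi/2))
      refine dF.congr_deriv ?_
      rw [hh]
      field_simp
      ring_nf
      nlinarith [Real.sin_sq_add_cos_sq α]
    have hint' : IntervalIntegrable h volume 0 b := by
      rw [intervalIntegrable_iff_integrableOn_Icc_of_le hb0]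
      exact h_integrableOn.mono_set (Set.Icc_subset_Icc le_rfl (by linarith))
    rw [hG]
    simp only
    rw [intervalIntegral.integral_eq_sub_of_hasDerivAt hderiv hint']
    rw [hF]
    simp [Real.sin_zero, Real.cos_zero, Real.log_one]
  have hmap : Tendsto (fun b => Real.pi/2 - b) (𝓝[Set.Ico 0 (Real.pi/2)] (Real.pi/2))
      (𝓝[≠] 0) := by
    apply tendsto_nhdsWithin_of_tendsto_nhds_of_eventually_within
    · have : Tendsto (fun b : ℝ => Real.pi/2 - b) (𝓝 (Real.pi/2))
          (𝓝 (Real.pi/2 - Real.pi/2)) := tendsto_const_nhds.sub tendsto_id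
      simpa using this.mono_left nhdsWithin_le_nhds
    · filter_upwards [eventually_mem_nhdsWithin] with b hb
      simp only [Set.mem_compl_iff, Set.mem_singleton_iff]
      have := hb.2
      intro hcontra
      have : b = Real.pi/2 := by linarith [sub_eq_zero.1 hcontra]
      linarith
  have hFtend : Tendsto F (𝓝[Set.Ico 0 (Real.pi/2)] (Real.pi/2))
      (𝓝 (Real.log 2 - Real.log (Real.pi/2))) := by
    have hinv : Tendsto (fun x : ℝ => x / Real.sin x) (𝓝[≠] 0) (𝓝 1) := by
      have h2 := sin_div_tendsto.inv₀ one_ne_zero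
      rw [inv_one] at h2
      refine Tendsto.congr (fun x => ?_) h2
      rw [inv_div]
    have hrat : Tendsto (fun b => (Real.pi/2 - b) / Real.cos b)
        (𝓝[Set.Ico 0 (Real.pi/2)] (Real.pi/2)) (𝓝 1) := by
      have hcomp := hinv.comp hmap
      refine Tendsto.congr (fun b => ?_) hcomp
      simp only [Function.comp_apply]
      rw [Real.sin_pi_div_two_sub]
    have hlog1 : Tendsto (fun b => Real.log (1 + Real.sin b))
        (𝓝[Set.Ico 0 (Real.pi/2)] (Real.pi/2)) (𝓝 (Real.log 2)) := by
      have hs : Tendsto (fun b : ℝ => 1 + Real.sin b) (𝓝 (Real.pi/2)) (𝓝 2) := by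
        have hc : Continuous (fun b : ℝ => 1 + Real.sin b) :=
          continuous_const.add Real.continuous_sin
        have := hc.continuousAt (x := Real.pi/2)
        rw [ContinuousAt, Real.sin_pi_div_two, show (1:ℝ)+1 = 2 by norm_num] at this
        exact this
      exact (((Real.continuousAt_log (by norm_num : (2:ℝ) ≠ 0)).tendsto).comp hs).mono_left
        nhdsWithin_le_nhds
    have hlog2 : Tendsto (fun b => Real.log ((Real.pi/2 - b)/Real.cos b))
        (𝓝[Set.Ico 0 (Real.pi/2)] (Real.pi/2)) (𝓝 0) := by
      have := ((Real.continuousAt_log one_ne_zero).tendsto).comp hrat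
      simpa [Real.log_one, Function.comp_def] using this
    have hsum := (hlog1.add hlog2).sub_const (Real.log (Real.pi/2))
    have hval : Real.log 2 + 0 - Real.log (Real.pi/2) = Real.log 2 - Real.log (Real.pi/2) := by
      ring
    rw [hval] at hsum
    refine Tendsto.congr' ?_ hsum
    filter_upwards [eventually_mem_nhdsWithin] with b hb
    have hb2 : b < Real.pi/2 := hb.2
    have hcos : 0 < Real.cos b := Real.cos_pos_of_mem_Ioo ⟨by linarith [hb.1], hb2⟩
    have hxp : (0:ℝ) < Real.pi/2 - b := by linarith
    rw [hF]
    simp only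
    rw [Real.log_div (ne_of_gt hxp) (ne_of_gt hcos)]
    ring
  have hGF' : G =ᶠ[𝓝[Set.Ico 0 (Real.pi/2)] (Real.pi/2)] F := by
    filter_upwards [eventually_mem_nhdsWithin] with b hb using hGF b hb
  haveI : (𝓝[Set.Ico 0 (Real.pi/2)] (Real.pi/2)).NeBot :=
    right_nhdsWithin_Ico_neBot (by positivity)
  have huniq : G (Real.pi/2) = Real.log 2 - Real.log (Real.pi/2) :=
    tendsto_nhds_unique (hGtend.congr' hGF') hFtend
  show G (Real.pi/2) = _
  rw [huniq]
  have h4 : Real.log 4 = 2 * Real.log 2 := by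
    rw [show (4:ℝ) = 2^2 by norm_num, Real.log_pow]
    push_cast
    ring
  rw [h4, Real.log_div (ne_of_gt hpi) (by norm_num : (2:ℝ) ≠ 0)]
  ring

lemma K_asymp :
    Tendsto (fun τ => ellipticK (kappa τ) - (4*τ + Real.log 4)) atTop (𝓝 0) := by
  have hpi := Real.pi_pos
  have h1 := I2_tendsto
  rw [J_value] at h1
  have h1' := h1.sub_const (Real.log 4 - Real.log Real.pi)
  rw [sub_self] at h1'
  have hsum := h1'.add arsinh_asymp
  rw [add_zero] at hsum
  refine Tendsto.congr' ?_ hsum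
  filter_upwards [eventually_ge_atTop (0:ℝ)] with τ hτ
  have hε := kappaT_pos τ
  have hKeq : ellipticK (kappa τ)
      = (∫ α in (0:ℝ)..(Real.pi/2),
          (1/Real.sqrt (fA (kappaT τ) α) - 1/Real.sqrt ((Real.pi/2-α)^2 + kappaT τ^2)))
        + Real.arsinh (Real.pi/(2 * kappaT τ)) := by
    rw [ellipticK_eq hτ, ← g_integral hε,
      intervalIntegral.integral_sub ((contF hε).intervalIntegrable _ _)
        ((contG hε).intervalIntegrable _ _)]
    ring
  rw [hKeq]
  ring

lemma E_lower {τ : ℝ} (hτ : 0 ≤ τ) : 1 ≤ ellipticE (kappa τ) := by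
  have hpi := Real.pi_pos
  have hε := kappaT_pos τ
  rw [ellipticE_eq hτ]
  have hcont : Continuous (fun α => Real.sqrt (fA (kappaT τ) α)) :=
    ((Real.continuous_cos.pow 2).add
      (continuous_const.mul (Real.continuous_sin.pow 2))).sqrt
  have hcosint : (∫ α in (0:ℝ)..(Real.pi/2), Real.cos α) = 1 := by
    simp
  rw [← hcosint]
  apply intervalIntegral.integral_mono_on (by positivity)
    (Real.continuous_cos.intervalIntegrable _ _) (hcont.intervalIntegrable _ _)
  intro α hα
  have hcos0 : 0 ≤ Real.cos α :=
    Real.cos_nonneg_of_mem_Icc ⟨by linarith [hα.1], hα.2⟩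
  calc Real.cos α = Real.sqrt (Real.cos α ^ 2) := (Real.sqrt_sq hcos0).symm
    _ ≤ Real.sqrt (fA (kappaT τ) α) := Real.sqrt_le_sqrt (by
        rw [fA]
        nlinarith [mul_nonneg (sq_nonneg (kappaT τ)) (sq_nonneg (Real.sin α))])

lemma E_upper {τ : ℝ} (hτ : 0 ≤ τ) :
    ellipticE (kappa τ) ≤ 1 + kappaT τ^2 * ellipticK (kappa τ) := by
  have hpi := Real.pi_pos
  have hε := kappaT_pos τ
  rw [ellipticE_eq hτ, ellipticK_eq hτ]
  have hcont : Continuous (fun α => Real.sqrt (fA (kappaT τ) α)) :=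
    ((Real.continuous_cos.pow 2).add
      (continuous_const.mul (Real.continuous_sin.pow 2))).sqrt
  have hpt : ∀ α ∈ Set.Icc (0:ℝ) (Real.pi/2),
      Real.sqrt (fA (kappaT τ) α)
        ≤ Real.cos α + kappaT τ^2 * (1/Real.sqrt (fA (kappaT τ) α)) := by
    intro α hα
    have hcos0 : 0 ≤ Real.cos α :=
      Real.cos_nonneg_of_mem_Icc ⟨by linarith [hα.1], hα.2⟩
    have hA : 0 < fA (kappaT τ) α := fA_pos hε α
    have hsa : 0 < Real.sqrt (fA (kappaT τ) α) := Real.sqrt_pos.2 hA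
    have hsa2 : Real.sqrt (fA (kappaT τ) α) ^ 2 = fA (kappaT τ) α := Real.sq_sqrt hA.le
    have hclesa : Real.cos α ≤ Real.sqrt (fA (kappaT τ) α) := by
      calc Real.cos α = Real.sqrt (Real.cos α ^ 2) := (Real.sqrt_sq hcos0).symm
        _ ≤ Real.sqrt (fA (kappaT τ) α) := Real.sqrt_le_sqrt (by
            rw [fA]
            nlinarith [mul_nonneg (sq_nonneg (kappaT τ)) (sq_nonneg (Real.sin α))])
    rw [mul_one_div, ← sub_le_iff_le_add', le_div_iff₀ hsa]
    have hfa : fA (kappaT τ) α = Real.cos α ^2 + kappaT τ^2 * Real.sin α ^2 := rfl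
    nlinarith [Real.sin_sq_add_cos_sq α, sq_nonneg (kappaT τ), hsa2, hclesa,
      mul_nonneg (sq_nonneg (kappaT τ)) (sq_nonneg (Real.sin α))]
  have hrint : IntervalIntegrable
      (fun α => Real.cos α + kappaT τ^2 * (1/Real.sqrt (fA (kappaT τ) α))) volume 0 (Real.pi/2) :=
    (Real.continuous_cos.add (continuous_const.mul (contF hε))).intervalIntegrable _ _
  have h1 := intervalIntegral.integral_mono_on (by positivity : (0:ℝ) ≤ Real.pi/2)
    (hcont.intervalIntegrable _ _) hrint hpt
  refine h1.trans (le_of_eq ?_)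
  rw [intervalIntegral.integral_add (Real.continuous_cos.intervalIntegrable _ _)
    (((contF hε).intervalIntegrable _ _).const_mul _),
    intervalIntegral.integral_const_mul]
  simp

lemma decay (n : ℕ) :
    Tendsto (fun τ : ℝ => kappaT τ^2 * (4*τ + Real.log 4)^n) atTop (𝓝 0) := by
  have hg : Tendsto (fun τ : ℝ => (8*τ)^n * Real.exp (-(8*τ))) atTop (𝓝 0) := by
    have := (tendsto_pow_mul_exp_neg_atTop_nhds_zero n).comp
      (Tendsto.const_mul_atTop (by norm_num : (0:ℝ) < 8) tendsto_id)
    simpa [Function.comp_def] using this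
  apply squeeze_zero' (g := fun τ : ℝ => (8*τ)^n * Real.exp (-(8*τ)))
  · filter_upwards [eventually_ge_atTop (1:ℝ)] with τ hτ
    have hlog : (0:ℝ) ≤ Real.log 4 := Real.log_nonneg (by norm_num)
    positivity
  · filter_upwards [eventually_ge_atTop (1:ℝ)] with τ hτ
    have hlog4 : Real.log 4 ≤ 3 := by
      nlinarith [Real.log_le_sub_one_of_pos (by norm_num : (0:ℝ) < 4)]
    have hlog : (0:ℝ) ≤ Real.log 4 := Real.log_nonneg (by norm_num)
    have hbase : 0 ≤ 4*τ + Real.log 4 := by linarith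
    have hbound : 4*τ + Real.log 4 ≤ 8*τ := by linarith
    rw [kappaT_sq, show (-8)*τ = -(8*τ) by ring, mul_comm]
    exact mul_le_mul_of_nonneg_right (pow_le_pow_left₀ hbase hbound n)
      (Real.exp_pos _).le
  · exact hg

lemma e2_tendsto : Tendsto (fun τ : ℝ => kappaT τ^2) atTop (𝓝 0) := by
  have := decay 0
  simpa using this

lemma e2P_tendsto : Tendsto (fun τ : ℝ => kappaT τ^2 * (4*τ + Real.log 4)) atTop (𝓝 0) := by
  have := decay 1
  simpa using this

lemma e2K_tendsto : Tendsto (fun τ : ℝ => kappaT τ^2 * ellipticK (kappa τ)) atTop (𝓝 0) := by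
  have h := (e2_tendsto.mul K_asymp).add e2P_tendsto
  rw [show (0:ℝ)*0 + 0 = 0 by ring] at h
  refine h.congr (fun τ => by ring)

lemma e2KP_tendsto :
    Tendsto (fun τ : ℝ => kappaT τ^2 * ellipticK (kappa τ) * (4*τ + Real.log 4))
      atTop (𝓝 0) := by
  have h2 := decay 2
  have h := (e2P_tendsto.mul K_asymp).add h2
  rw [show (0:ℝ)*0 + 0 = 0 by ring] at h
  refine h.congr (fun τ => by ring)

lemma v_tendsto : Tendsto (fun τ : ℝ => ellipticE (kappa τ) - 1) atTop (𝓝 0) := by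
  apply squeeze_zero' (g := fun τ : ℝ => kappaT τ^2 * ellipticK (kappa τ))
  · filter_upwards [eventually_ge_atTop (0:ℝ)] with τ hτ
    linarith [E_lower hτ]
  · filter_upwards [eventually_ge_atTop (0:ℝ)] with τ hτ
    linarith [E_upper hτ]
  · exact e2K_tendsto

lemma P_nonneg : ∀ᶠ τ : ℝ in atTop, 0 ≤ 4*τ + Real.log 4 := by
  filter_upwards [eventually_ge_atTop (0:ℝ)] with τ hτ
  have hlog : (0:ℝ) ≤ Real.log 4 := Real.log_nonneg (by norm_num)
  linarith

lemma vP_tendsto :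
    Tendsto (fun τ : ℝ => (ellipticE (kappa τ) - 1) * (4*τ + Real.log 4)) atTop (𝓝 0) := by
  apply squeeze_zero'
    (g := fun τ : ℝ => kappaT τ^2 * ellipticK (kappa τ) * (4*τ + Real.log 4))
  · filter_upwards [eventually_ge_atTop (0:ℝ), P_nonneg] with τ hτ hP
    have := E_lower hτ
    exact mul_nonneg (by linarith) hP
  · filter_upwards [eventually_ge_atTop (0:ℝ), P_nonneg] with τ hτ hP
    exact mul_le_mul_of_nonneg_right (by linarith [E_upper hτ]) hP
  · exact e2KP_tendsto


/-- Asymptotics of the covariance matrix entries as τ → ∞. -/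
theorem stmt_6 :
    Tendsto (fun τ => G₁₁ τ + (4 / Real.pi ^ 2) * (4 * τ + Real.log 4 - 1)) atTop (𝓝 0) ∧
    Tendsto (fun τ => G₁₂ τ - (4 / Real.pi ^ 2) * (4 * τ + Real.log 4)) atTop (𝓝 0) := by
  have hpi := Real.pi_pos
  have hU := K_asymp
  have hv := v_tendsto
  have hvP := vP_tendsto
  have he2 := e2_tendsto
  have he2P := e2P_tendsto
  have he2K := e2K_tendsto
  have he2KP := e2KP_tendsto
  constructor
  · -- G₁₁
    have hN : Tendsto (fun τ : ℝ =>
        ((4*τ + Real.log 4) - 1) * (1 - kappaT τ^2)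
          - (ellipticE (kappa τ) - kappaT τ^2 * ellipticK (kappa τ))
            * (ellipticK (kappa τ) - ellipticE (kappa τ))) atTop (𝓝 0) := by
      have base := (((((((he2P.neg.add he2).sub hU).add hv).sub hvP).add hv).add
        (he2KP)).sub he2K).sub
        ((hv.sub he2K).mul (hU.sub hv))
      norm_num at base
      refine base.congr (fun τ => by ring)
    have h1me2 : Tendsto (fun τ : ℝ => 1 - kappaT τ^2) atTop (𝓝 1) := by
      have := (tendsto_const_nhds (x := (1:ℝ))).sub he2
      simpa using this
    have hdiv := hN.div h1me2 one_ne_zero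
    rw [show (0:ℝ)/1 = 0 by norm_num] at hdiv
    have hfinal := (tendsto_const_nhds (x := 4/Real.pi^2)).mul hdiv
    rw [mul_zero] at hfinal
    refine Tendsto.congr' ?_ hfinal
    filter_upwards [eventually_ge_atTop (1:ℝ)] with τ hτ1
    have hτ : (0:ℝ) ≤ τ := by linarith
    have hk2 : kappa τ^2 = 1 - kappaT τ^2 := kappa_sq hτ
    have hlt : kappaT τ^2 < 1 := by
      rw [kappaT_sq]
      exact Real.exp_lt_one_iff.2 (by linarith)
    have hne : 1 - kappaT τ^2 ≠ 0 := by linarith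
    rw [G₁₁, hk2]
    simp only [Pi.div_apply]
    field_simp
    ring
  · -- G₁₂
    have hcomb := (hU.add hvP).add (hv.mul hU)
    rw [show ((0:ℝ) + 0) + 0*0 = 0 by ring] at hcomb
    have hfinal := (tendsto_const_nhds (x := 4/Real.pi^2)).mul hcomb
    rw [mul_zero] at hfinal
    refine hfinal.congr (fun τ => ?_)
    rw [G₁₂]
    ring
end
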